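/- For every integer n ≥ 2, the n elements x_{n,0}, x̄_{n,2}, x̄_{n,3}, …, x̄_{n,n} of R_n are algebraically independent over ℚ. -/

import Mathlib

open MvPolynomial

noncomputable section

/-- `R n` is the polynomial ring `ℚ[x_{n,0}, …, x_{n,n}]`. -/
abbrev R (n : ℕ) : Type := MvPolynomial (Fin (n + 1)) ℚ

/-- The variable `x_{n,k}` of `R n` (and `0` for out-of-range indices, which never occur below). -/
def x (n k : ℕ) : R n := if h : k < n + 1 then X ⟨k, h⟩ else 0

/-- The derivation `D_n = Σ_{k=0}^{n-1} x_{n,k} ∂/∂x_{n,k+1}`, i.e. the unique `ℚ`-linear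
derivation with `D_n(x_{n,k}) = x_{n,k-1}` for `1 ≤ k ≤ n` and `D_n(x_{n,0}) = 0`. -/
def D (n : ℕ) : Derivation ℚ (R n) (R n) :=
  MvPolynomial.mkDerivation ℚ fun j : Fin (n + 1) =>
    if (j : ℕ) = 0 then 0 else x n ((j : ℕ) - 1)

/-- `x̄_{n,2ℓ} := x_{n,ℓ}² + 2 Σ_{i=0}^{ℓ−1} (−1)^{ℓ+i} x_{n,i} x_{n,2ℓ−i}`. -/
def xbarE (n l : ℕ) : R n :=
  x n l ^ 2 + 2 * ∑ i ∈ Finset.range l, (-1 : R n) ^ (l + i) * x n i * x n (2 * l - i)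

/-- `x̂_{n,2ℓ+1} := x_{n,ℓ}x_{n,ℓ+1} + Σ_{i=0}^{ℓ−1} (−1)^{ℓ+i}(2ℓ−2i+1) x_{n,i} x_{n,2ℓ+1−i}`. -/
def xhatO (n l : ℕ) : R n :=
  x n l * x n (l + 1) +
    ∑ i ∈ Finset.range l,
      (-1 : R n) ^ (l + i) * ((2 * l - 2 * i + 1 : ℕ) : R n) * x n i * x n (2 * l + 1 - i)

/-- `x̄_{n,2ℓ+1} := x_{n,1}·x̄_{n,2ℓ} − x_{n,0}·x̂_{n,2ℓ+1}`. -/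
def xbarO (n l : ℕ) : R n := x n 1 * xbarE n l - x n 0 * xhatO n l

/-- `x̄_{n,k}` for `k ≥ 2` (even or odd case). -/
def xbar (n k : ℕ) : R n := if k % 2 = 0 then xbarE n (k / 2) else xbarO n (k / 2)

/-! ### Auxiliary constructions for the proof -/

/-- Auxiliary polynomial ring in `n` variables. -/
abbrev Saux (n : ℕ) : Type := MvPolynomial (Fin n) ℚ

/-- Its field of fractions. -/
abbrev Kaux (n : ℕ) : Type := FractionRing (Saux n)

/-- The images of the (to-be) variables in the fraction field. -/
def T (n j : ℕ) : Kaux n := if h : j < n then algebraMap (Saux n) (Kaux n) (X ⟨j, h⟩) else 0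

lemma T0_ne (n : ℕ) (hn : 0 < n) : T n 0 ≠ 0 := by
  rw [T, dif_pos hn]
  simpa using (map_ne_zero_iff _ (IsFractionRing.injective (Saux n) (Kaux n))).mpr (X_ne_zero _)

/-- The recursively defined substitution values. -/
noncomputable def u (n : ℕ) (k : ℕ) : Kaux n :=
  if k = 0 then T n 0
  else if k = 1 then 0
  else if k % 2 = 0 then
    (-1 : Kaux n) ^ (k / 2) * (T n (k - 1) - u n (k / 2) ^ 2
      - 2 * ∑ i ∈ (Finset.Ico 1 (k / 2)).attach,
          (-1 : Kaux n) ^ (k / 2 + i.1) * u n i.1 * u n (k - i.1))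
      / (2 * T n 0)
  else
    ((-1 : Kaux n) ^ (k / 2 + 1) / ((k : Kaux n) * T n 0)) *
      (T n (k - 1) / T n 0 + u n (k / 2) * u n (k / 2 + 1)
        + ∑ i ∈ (Finset.Ico 1 (k / 2)).attach,
            (-1 : Kaux n) ^ (k / 2 + i.1) * ((2 * (k / 2) - 2 * i.1 + 1 : ℕ) : Kaux n)
              * u n i.1 * u n (k - i.1))
termination_by k
decreasing_by
  all_goals first
  | omega
  | (rename_i hi; have := Finset.mem_Ico.mp i.2; omega)

lemma u_zero (n : ℕ) : u n 0 = T n 0 := by rw [u]; norm_num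
lemma u_one (n : ℕ) : u n 1 = 0 := by rw [u]; norm_num

lemma u_even_eq (n l : ℕ) (hl : 0 < l) :
    u n (2 * l) = (-1 : Kaux n) ^ l * (T n (2 * l - 1) - u n l ^ 2
      - 2 * ∑ i ∈ Finset.Ico 1 l,
          (-1 : Kaux n) ^ (l + i) * u n i * u n (2 * l - i)) / (2 * T n 0) := by
  rw [u]
  have h0 : ¬ (2 * l = 0) := by omega
  have h1 : ¬ (2 * l = 1) := by omega
  have h2 : 2 * l % 2 = 0 := by omega
  have h3 : 2 * l / 2 = l := by omega
  rw [if_neg h0, if_neg h1, if_pos h2, h3,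
    Finset.sum_attach (Finset.Ico 1 l)
      (fun i => (-1 : Kaux n) ^ (l + i) * u n i * u n (2 * l - i))]

lemma u_odd_eq (n l : ℕ) (hl : 0 < l) :
    u n (2 * l + 1) = ((-1 : Kaux n) ^ (l + 1) / (((2 * l + 1 : ℕ) : Kaux n) * T n 0)) *
      (T n (2 * l) / T n 0 + u n l * u n (l + 1)
        + ∑ i ∈ Finset.Ico 1 l,
            (-1 : Kaux n) ^ (l + i) * ((2 * l - 2 * i + 1 : ℕ) : Kaux n)
              * u n i * u n (2 * l + 1 - i)) := by
  rw [u]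
  have h0 : ¬ (2 * l + 1 = 0) := by omega
  have h1 : ¬ (2 * l + 1 = 1) := by omega
  have h2 : ¬ ((2 * l + 1) % 2 = 0) := by omega
  have h3 : (2 * l + 1) / 2 = l := by omega
  have h4 : (2 * l + 1 - 1) = 2 * l := by omega
  rw [if_neg h0, if_neg h1, if_neg h2, h3, h4,
    Finset.sum_attach (Finset.Ico 1 l)
      (fun i => (-1 : Kaux n) ^ (l + i) * ((2 * l - 2 * i + 1 : ℕ) : Kaux n)
        * u n i * u n (2 * l + 1 - i))]

theorem helper_even {F : Type} [Field F] [CharZero F] (c t a s e : F) (hc : c ≠ 0)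
    (he : e ^ 2 = 1) :
    a ^ 2 + 2 * (e * c * (e * (t - a ^ 2 - 2 * s) / (2 * c)) + s) = t := by
  have h : e * c * (e * (t - a ^ 2 - 2 * s) / (2 * c)) = (t - a ^ 2 - 2 * s) / 2 := by
    field_simp
    linear_combination (t - a ^ 2 - 2 * s) * he
  rw [h]
  have h2 : e ^ 2 * (t - a ^ 2 - 2 * s) = t - a ^ 2 - 2 * s := by rw [he, one_mul]
  ring

theorem helper_odd {F : Type} [Field F] [CharZero F] (c t a b s z m e e1 : F) (hc : c ≠ 0)
    (hm : m ≠ 0) (hee : e * e1 = -1) :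
    0 * z - c * (a * b + (e * m * c * (e1 / (m * c) * (t / c + a * b + s)) + s)) = t := by
  have h : e * m * c * (e1 / (m * c) * (t / c + a * b + s))
      = (e * e1) * (t / c + a * b + s) := by
    field_simp
  rw [h, hee]
  field_simp
  ring

lemma neg_one_pow_sq (n l : ℕ) : ((-1 : Kaux n) ^ l) ^ 2 = 1 := by
  rw [← pow_mul, mul_comm, pow_mul, neg_one_sq, one_pow]

lemma key_even (n l : ℕ) (hn : 0 < n) (hl : 0 < l) :
    u n l ^ 2 + 2 * ∑ i ∈ Finset.range l, (-1 : Kaux n) ^ (l + i) * u n i * u n (2 * l - i)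
      = T n (2 * l - 1) := by
  have hc := T0_ne n hn
  rw [Finset.range_eq_Ico, Finset.sum_eq_sum_Ico_succ_bot hl]
  simp only [Nat.sub_zero, Nat.add_zero, Nat.zero_add]
  rw [u_even_eq n l hl, u_zero]
  exact helper_even _ _ _ _ _ hc (neg_one_pow_sq n l)

lemma key_odd (n l : ℕ) (hn : 0 < n) (hl : 0 < l) :
    u n 1 * (u n l ^ 2
        + 2 * ∑ i ∈ Finset.range l, (-1 : Kaux n) ^ (l + i) * u n i * u n (2 * l - i))
      - u n 0 * (u n l * u n (l + 1)
        + ∑ i ∈ Finset.range l, (-1 : Kaux n) ^ (l + i) * ((2 * l - 2 * i + 1 : ℕ) : Kaux n)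
            * u n i * u n (2 * l + 1 - i))
      = T n (2 * l) := by
  have hc := T0_ne n hn
  have hm : ((2 * l + 1 : ℕ) : Kaux n) ≠ 0 := Nat.cast_ne_zero.mpr (by omega)
  rw [u_one, Finset.range_eq_Ico, Finset.sum_eq_sum_Ico_succ_bot hl (fun i =>
    (-1 : Kaux n) ^ (l + i) * ((2 * l - 2 * i + 1 : ℕ) : Kaux n) * u n i
      * u n (2 * l + 1 - i))]
  simp only [Nat.sub_zero, Nat.add_zero, Nat.zero_add, Nat.mul_zero]
  rw [u_odd_eq n l hl, u_zero]
  have hee : (-1 : Kaux n) ^ l * (-1 : Kaux n) ^ (l + 1) = -1 := by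
    rw [← pow_add]
    exact Odd.neg_one_pow ⟨l, by omega⟩
  exact helper_odd _ _ _ _ _ _ _ _ _ hc hm hee

/-- The substitution algebra homomorphism. -/
def F (n : ℕ) : R n →ₐ[ℚ] Kaux n := aeval (fun j : Fin (n + 1) => u n (j : ℕ))

lemma F_x (n k : ℕ) (h : k ≤ n) : F n (x n k) = u n k := by
  rw [x, dif_pos (by omega : k < n + 1)]
  simp [F]

lemma F_xbarE (n l : ℕ) (h : 2 * l ≤ n) :
    F n (xbarE n l) = u n l ^ 2
      + 2 * ∑ i ∈ Finset.range l, (-1 : Kaux n) ^ (l + i) * u n i * u n (2 * l - i) := by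
  rw [xbarE, map_add, map_pow, map_mul, map_sum, F_x n l (by omega)]
  congr 1
  congr 1
  · exact map_ofNat _ 2
  · apply Finset.sum_congr rfl
    intro i hi
    have hi' := Finset.mem_range.mp hi
    rw [map_mul, map_mul, map_pow, map_neg, map_one,
      F_x n i (by omega), F_x n (2 * l - i) (by omega)]

lemma F_xhatO (n l : ℕ) (h : 2 * l + 1 ≤ n) :
    F n (xhatO n l) = u n l * u n (l + 1)
      + ∑ i ∈ Finset.range l, (-1 : Kaux n) ^ (l + i) * ((2 * l - 2 * i + 1 : ℕ) : Kaux n)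
          * u n i * u n (2 * l + 1 - i) := by
  rw [xhatO, map_add, map_mul, map_sum, F_x n l (by omega), F_x n (l + 1) (by omega)]
  congr 1
  apply Finset.sum_congr rfl
  intro i hi
  have hi' := Finset.mem_range.mp hi
  rw [map_mul, map_mul, map_mul, map_pow, map_neg, map_one, map_natCast,
    F_x n i (by omega), F_x n (2 * l + 1 - i) (by omega)]

lemma F_xbar (n k : ℕ) (h2 : 2 ≤ k) (hk : k ≤ n) : F n (xbar n k) = T n (k - 1) := by
  have hn : 0 < n := by omega
  rw [xbar]
  by_cases hp : k % 2 = 0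
  · rw [if_pos hp, F_xbarE n (k / 2) (by omega),
      key_even n (k / 2) hn (by omega)]
    congr 1
    omega
  · rw [if_neg hp, xbarO, map_sub, map_mul, map_mul,
      F_x n 1 (by omega), F_x n 0 (by omega),
      F_xbarE n (k / 2) (by omega), F_xhatO n (k / 2) (by omega),
      key_odd n (k / 2) hn (by omega)]
    congr 1
    omega

/-- For every `n ≥ 2`, the `n` elements `x_{n,0}, x̄_{n,2}, x̄_{n,3}, …, x̄_{n,n}` of `R_n`
are algebraically independent over `ℚ`. -/
theorem statement2 (n : ℕ) (hn : 2 ≤ n) :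
    AlgebraicIndependent ℚ
      (fun i : Fin n => if (i : ℕ) = 0 then x n 0 else xbar n ((i : ℕ) + 1)) := by
  have hw : AlgebraicIndependent ℚ
      (fun i : Fin n => algebraMap (Saux n) (Kaux n) (X i)) := by
    have := (MvPolynomial.algebraicIndependent_X (Fin n) ℚ).map'
      (f := IsScalarTower.toAlgHom ℚ (Saux n) (Kaux n))
      (IsFractionRing.injective (Saux n) (Kaux n))
    exact this
  refine AlgebraicIndependent.of_comp (F n) ?_
  have heq : (F n) ∘ (fun i : Fin n => if (i : ℕ) = 0 then x n 0 else xbar n ((i : ℕ) + 1))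
      = fun i : Fin n => algebraMap (Saux n) (Kaux n) (X i) := by
    funext i
    show F n (if (i : ℕ) = 0 then x n 0 else xbar n ((i : ℕ) + 1)) = _
    by_cases h : (i : ℕ) = 0
    · have hi : i = (⟨0, by omega⟩ : Fin n) := Fin.ext h
      rw [if_pos h, F_x n 0 (by omega), u_zero, T, dif_pos (by omega : (0 : ℕ) < n), hi]
    · rw [if_neg h, F_xbar n ((i : ℕ) + 1) (by omega) (by omega),
        show ((i : ℕ) + 1 - 1) = (i : ℕ) from rfl, T, dif_pos i.isLt]
  rw [heq]
  exact hw

end
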